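/- Finiteness of all moments of hitting times of reflected drifted Brownian motion (Proposition 'Moments of T^c_{z0,z1}'): Let (W_r)_{r ≥ 0} be a standard one-dimensional Brownian motion on a probability space (Ω, F, P). Let c ∈ ℝ and 0 ≤ z0 ≤ z1. Define Z_r = (Γ^{+,0}β)(r) with base point 0 and β(r) = z0 + c·r + W_r, and set T = inf{ r ≥ 0 : Z_r = z1 }. Then T is almost surely finite and for every integer k ≥ 1, E[T^k] < ∞. -/

import Mathlib

open MeasureTheory ProbabilityTheory
open scoped ENNReal NNReal

/-- Positive reflection map at level `z`, based at `r0`: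
`(Γ^{+,z}β)(r) = β(r) + sup_{u ∈ [r0, r]} max(z − β(u), 0)`. -/
noncomputable def posRefl (r0 z : ℝ) (β : ℝ → ℝ) (r : ℝ) : ℝ :=
  β r + sSup ((fun u => max (z - β u) 0) '' Set.Icc r0 r)

namespace RDBMhelper
open Set

variable {g : ℝ → ℝ}

lemma bddAbove_image (hg : ContinuousOn g (Ici 0)) (r : ℝ) : BddAbove (g '' Icc 0 r) :=
  (isCompact_Icc.image_of_continuousOn (hg.mono Icc_subset_Ici_self)).bddAbove

lemma le_runSup (hg : ContinuousOn g (Ici 0)) {u r : ℝ} (hu : u ∈ Icc 0 r) :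
    g u ≤ sSup (g '' Icc 0 r) :=
  le_csSup (bddAbove_image hg r) ⟨u, hu, rfl⟩

lemma runSup_mono (hg : ContinuousOn g (Ici 0)) {r s : ℝ} (h0 : 0 ≤ r) (hrs : r ≤ s) :
    sSup (g '' Icc 0 r) ≤ sSup (g '' Icc 0 s) :=
  csSup_le_csSup (bddAbove_image hg s) (⟨g 0, 0, ⟨le_refl 0, h0⟩, rfl⟩)
    (image_mono (Icc_subset_Icc le_rfl hrs))

lemma runSup_split (hg : ContinuousOn g (Ici 0)) {r s : ℝ} (h0 : 0 ≤ r) (hrs : r ≤ s) :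
    sSup (g '' Icc 0 s) = max (sSup (g '' Icc 0 r)) (sSup (g '' Icc r s)) := by
  rw [← Set.Icc_union_Icc_eq_Icc h0 hrs, image_union]
  exact csSup_union (bddAbove_image hg r) ⟨g 0, 0, ⟨le_refl 0, h0⟩, rfl⟩
    ((isCompact_Icc.image_of_continuousOn (hg.mono (Icc_subset_Ici_self.trans
      (Ici_subset_Ici.mpr h0)))).bddAbove) ⟨g r, r, ⟨le_rfl, hrs⟩, rfl⟩

lemma runSup_continuousOn (hg : ContinuousOn g (Ici 0)) :
    ContinuousOn (fun r => sSup (g '' Icc 0 r)) (Ici 0) := by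
  intro a ha
  rw [Metric.continuousWithinAt_iff]
  intro ε hε
  obtain ⟨δ, hδ, hgd⟩ := Metric.continuousWithinAt_iff.mp (hg a ha) (ε / 3) (by linarith)
  refine ⟨δ, hδ, fun {s} hs hd => ?_⟩
  have hga : g a ≤ sSup (g '' Icc 0 a) := le_runSup hg ⟨ha, le_rfl⟩
  rcases le_or_gt a s with has | hsa
  · -- a ≤ s
    have hsplit := runSup_split hg (ha : (0:ℝ) ≤ a) has
    have h1 : sSup (g '' Icc a s) ≤ g a + ε / 3 := by
      refine csSup_le ⟨g a, a, ⟨le_rfl, has⟩, rfl⟩ ?_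
      rintro x ⟨u, hu, rfl⟩
      have hu0 : u ∈ Ici (0:ℝ) := le_trans ha hu.1
      have hdu : dist u a < δ := by
        have h1 : |u - a| ≤ |s - a| := by
          rw [abs_of_nonneg (by linarith [hu.1] : (0:ℝ) ≤ u - a),
            abs_of_nonneg (by linarith : (0:ℝ) ≤ s - a)]
          linarith [hu.2]
        rw [Real.dist_eq]
        rw [Real.dist_eq] at hd
        linarith
      have := hgd hu0 hdu
      rw [Real.dist_eq] at this
      have := abs_lt.mp this
      linarith [this.1, this.2]
    have hle : sSup (g '' Icc 0 s) ≤ sSup (g '' Icc 0 a) + ε / 3 := by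
      rw [hsplit]
      exact max_le (by linarith [le_refl (sSup (g '' Icc 0 a))]) (by linarith)
    have hge : sSup (g '' Icc 0 a) ≤ sSup (g '' Icc 0 s) := runSup_mono hg ha has
    rw [Real.dist_eq, abs_lt]
    constructor <;> linarith
  · -- s < a
    have hsplit := runSup_split hg (hs : (0:ℝ) ≤ s) hsa.le
    have hgs : g s ≤ sSup (g '' Icc 0 s) := le_runSup hg ⟨hs, le_rfl⟩
    have hgsa : dist (g s) (g a) < ε / 3 := hgd hs hd
    have h1 : sSup (g '' Icc s a) ≤ g a + ε / 3 := by
      refine csSup_le ⟨g a, a, ⟨hsa.le, le_rfl⟩, rfl⟩ ?_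
      rintro x ⟨u, hu, rfl⟩
      have hu0 : u ∈ Ici (0:ℝ) := le_trans hs hu.1
      have hdu : dist u a < δ := by
        have h1 : |u - a| ≤ |s - a| := by
          rw [abs_of_nonpos (by linarith [hu.2] : u - a ≤ 0),
            abs_of_nonpos (by linarith : s - a ≤ 0)]
          linarith [hu.1]
        rw [Real.dist_eq]
        rw [Real.dist_eq] at hd
        linarith
      have := hgd hu0 hdu
      rw [Real.dist_eq] at this
      have := abs_lt.mp this
      linarith [this.1, this.2]
    have h2 : g a ≤ g s + ε / 3 := by
      rw [Real.dist_eq] at hgsa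
      have := abs_lt.mp hgsa
      linarith [this.1, this.2]
    have hle : sSup (g '' Icc 0 a) ≤ sSup (g '' Icc 0 s) + 2 * (ε / 3) := by
      rw [hsplit]
      exact max_le (by linarith [le_refl (sSup (g '' Icc 0 s))]) (by linarith)
    have hge : sSup (g '' Icc 0 s) ≤ sSup (g '' Icc 0 a) := runSup_mono hg hs hsa.le
    rw [Real.dist_eq, abs_lt]
    constructor <;> linarith


noncomputable def bfun (c z0 : ℝ) (w : ℝ → ℝ) : ℝ → ℝ := fun s => z0 + c * s + w s
noncomputable def gfun (c z0 : ℝ) (w : ℝ → ℝ) : ℝ → ℝ := fun u => max (0 - bfun c z0 w u) 0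
noncomputable def Zfun (c z0 : ℝ) (w : ℝ → ℝ) : ℝ → ℝ :=
  fun r => bfun c z0 w r + sSup (gfun c z0 w '' Icc 0 r)

variable {c z0 z1 : ℝ} {w : ℝ → ℝ}

lemma Zfun_eq (r : ℝ) : Zfun c z0 w r = posRefl 0 0 (fun s => z0 + c * s + w s) r := rfl

lemma bfun_continuousOn (wc : ContinuousOn w (Ici 0)) : ContinuousOn (bfun c z0 w) (Ici 0) := by
  exact (continuousOn_const.add (continuousOn_const.mul continuousOn_id)).add wc

lemma gfun_continuousOn (wc : ContinuousOn w (Ici 0)) : ContinuousOn (gfun c z0 w) (Ici 0) :=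
  ContinuousOn.sup (continuousOn_const.sub (bfun_continuousOn wc)) continuousOn_const

lemma Zfun_continuousOn (wc : ContinuousOn w (Ici 0)) : ContinuousOn (Zfun c z0 w) (Ici 0) :=
  (bfun_continuousOn wc).add (runSup_continuousOn (gfun_continuousOn wc))

lemma Zfun_zero (h0 : 0 ≤ z0) (w0 : w 0 = 0) : Zfun c z0 w 0 = z0 := by
  have : gfun c z0 w '' Icc (0:ℝ) 0 = {0} := by
    rw [Set.Icc_self, Set.image_singleton]
    have : gfun c z0 w 0 = 0 := by
      simp only [gfun, bfun, mul_zero, add_zero, w0]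
      rw [max_eq_right] <;> linarith
    rw [this]
  simp only [Zfun, this, csSup_singleton, bfun, mul_zero, add_zero, w0]

lemma Zfun_nonneg (wc : ContinuousOn w (Ici 0)) {r : ℝ} (hr : 0 ≤ r) : 0 ≤ Zfun c z0 w r := by
  have h := le_runSup (gfun_continuousOn (c := c) (z0 := z0) wc) (u := r) (r := r) ⟨hr, le_rfl⟩
  have : max (0 - bfun c z0 w r) 0 ≥ 0 - bfun c z0 w r := le_max_left _ _
  simp only [Zfun]
  have := le_trans this h
  linarith

lemma Zfun_incr (wc : ContinuousOn w (Ici 0)) {r s : ℝ} (hr : 0 ≤ r) (hrs : r ≤ s) :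
    Zfun c z0 w r + (bfun c z0 w s - bfun c z0 w r) ≤ Zfun c z0 w s := by
  have := runSup_mono (gfun_continuousOn (c := c) (z0 := z0) wc) hr hrs
  simp only [Zfun]; linarith

/-- left rational approximation of a continuous function value -/
lemma rat_left_approx {h : ℝ → ℝ} {x0 : ℝ} (hx : 0 ≤ x0)
    (hc : ContinuousWithinAt h (Ici 0) x0) {ε : ℝ} (hε : 0 < ε) :
    ∃ q : ℚ, 0 ≤ (q:ℝ) ∧ (q:ℝ) ≤ x0 ∧ |h q - h x0| < ε := by
  obtain ⟨δ, hδ, hd⟩ := Metric.continuousWithinAt_iff.mp hc ε hε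
  rcases eq_or_lt_of_le hx with hx0 | hx0
  · refine ⟨0, by norm_num, by rw [← hx0]; norm_num, by
      rw [Rat.cast_zero, ← hx0]; simpa using hε⟩
  · obtain ⟨q, hq1, hq2⟩ := exists_rat_btwn (max_lt (by linarith) (by linarith) :
      max 0 (x0 - δ) < x0)
    have hq0 : (0:ℝ) ≤ q := le_of_lt (lt_of_le_of_lt (le_max_left _ _) hq1)
    refine ⟨q, hq0, hq2.le, ?_⟩
    have : dist (q:ℝ) x0 < δ := by
      rw [Real.dist_eq, abs_of_nonpos (by linarith)]
      have := lt_of_le_of_lt (le_max_right 0 (x0 - δ)) hq1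
      linarith
    have := hd hq0 this
    rwa [Real.dist_eq] at this

/-- hitting via IVT -/
lemma path_hit (h0 : 0 ≤ z0) (h1 : z0 ≤ z1) (w0 : w 0 = 0) (wc : ContinuousOn w (Ici 0))
    {b : ℝ} (hb : 0 ≤ b) (hzb : z1 ≤ Zfun c z0 w b) :
    ∃ r, 0 ≤ r ∧ r ≤ b ∧ Zfun c z0 w r = z1 := by
  have hcont : ContinuousOn (Zfun c z0 w) (Icc 0 b) :=
    (Zfun_continuousOn wc).mono Icc_subset_Ici_self
  have := intermediate_value_Icc hb hcont
  have hz1 : z1 ∈ Icc (Zfun c z0 w 0) (Zfun c z0 w b) := by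
    rw [Zfun_zero h0 w0]; exact ⟨h1, hzb⟩
  obtain ⟨r, hr, hrz⟩ := this hz1
  exact ⟨r, hr.1, hr.2, hrz⟩

/-- characterization of `sInf ≤ a` via rationals -/
lemma path_char (h0 : 0 ≤ z0) (h1 : z0 ≤ z1) (w0 : w 0 = 0) (wc : ContinuousOn w (Ici 0))
    (hne : {r : ℝ | 0 ≤ r ∧ Zfun c z0 w r = z1}.Nonempty) {a : ℝ} (ha : 0 ≤ a) :
    sInf {r : ℝ | 0 ≤ r ∧ Zfun c z0 w r = z1} ≤ a ↔
      ∀ m : ℕ, ∃ q u : ℚ, (0 ≤ (u:ℝ) ∧ (u:ℝ) ≤ (q:ℝ) ∧ (q:ℝ) ≤ a) ∧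
        z1 - 1/(m+1) < (z0 + c * q + w q) + max (0 - (z0 + c * u + w u)) 0 := by
  set S := {r : ℝ | 0 ≤ r ∧ Zfun c z0 w r = z1} with hS
  have hbdd : BddBelow S := ⟨0, fun x hx => hx.1⟩
  have hclosed : IsClosed S := by
    have : S = Ici 0 ∩ Zfun c z0 w ⁻¹' {z1} := by
      ext r
      simp only [hS, Set.mem_setOf_eq, Set.mem_inter_iff, Set.mem_Ici,
        Set.mem_preimage, Set.mem_singleton_iff]
    rw [this]
    exact (Zfun_continuousOn wc).preimage_isClosed_of_isClosed isClosed_Ici isClosed_singleton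
  constructor
  · intro hTa m
    have hmem : sInf S ∈ S := hclosed.csInf_mem hne hbdd
    set t0 := sInf S with ht0
    have ht00 : 0 ≤ t0 := hmem.1
    have htz : Zfun c z0 w t0 = z1 := hmem.2
    have hεpos : (0:ℝ) < 1/(m+1) := by positivity
    -- step 1: rational q close to t0 from the left
    obtain ⟨q, hq0, hqt, hqc⟩ := rat_left_approx ht00 (Zfun_continuousOn wc t0 ht00)
      (half_pos hεpos)
    -- step 2: maximizer of gfun on [0, q]
    obtain ⟨x1, hx1mem, hx1max⟩ := isCompact_Icc.exists_isMaxOn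
      (nonempty_Icc.mpr hq0) ((gfun_continuousOn (c := c) (z0 := z0) wc).mono
        Icc_subset_Ici_self)
    have hMx1 : sSup (gfun c z0 w '' Icc 0 (q:ℝ)) = gfun c z0 w x1 := by
      apply le_antisymm
      · exact csSup_le ⟨gfun c z0 w 0, 0, ⟨le_rfl, hq0⟩, rfl⟩
          (by rintro x ⟨v, hv, rfl⟩; exact hx1max hv)
      · exact le_runSup (gfun_continuousOn wc) hx1mem
    obtain ⟨u, hu0, hux, huc⟩ := rat_left_approx hx1mem.1
      (gfun_continuousOn (c := c) (z0 := z0) wc x1 (le_trans hx1mem.1 le_rfl)) (half_pos hεpos)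
    refine ⟨q, u, ⟨hu0, le_trans hux hx1mem.2, le_trans hqt hTa⟩, ?_⟩
    have h1 : Zfun c z0 w q > z1 - 1/(m+1)/2 := by
      have h' := abs_lt.mp hqc
      rw [htz] at h'
      linarith [h'.1]
    have h2 : gfun c z0 w u > gfun c z0 w x1 - 1/(m+1)/2 := by
      have := abs_lt.mp huc; linarith [this.1]
    have h3 : (z0 + c * q + w q) + max (0 - (z0 + c * u + w u)) 0
        = bfun c z0 w q + gfun c z0 w u := rfl
    rw [h3]
    have h4 : Zfun c z0 w q = bfun c z0 w q + gfun c z0 w x1 := by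
      simp only [Zfun, hMx1]
    linarith [h1, h2, h4.symm.le]
  · intro hm
    -- maximizer of Zfun on [0, a]
    obtain ⟨x0, hx0mem, hx0max⟩ := isCompact_Icc.exists_isMaxOn
      (nonempty_Icc.mpr ha) ((Zfun_continuousOn (c := c) (z0 := z0) wc).mono
        Icc_subset_Ici_self)
    have hz1x0 : z1 ≤ Zfun c z0 w x0 := by
      by_contra hcon
      push_neg at hcon
      obtain ⟨m, hm'⟩ := exists_nat_one_div_lt (by linarith : (0:ℝ) < z1 - Zfun c z0 w x0)
      obtain ⟨q, u, ⟨hu0, huq, hqa⟩, hineq⟩ := hm m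
      have hgu : gfun c z0 w u ≤ sSup (gfun c z0 w '' Icc 0 (q:ℝ)) :=
        le_runSup (gfun_continuousOn wc) ⟨hu0, huq⟩
      have hq0 : (0:ℝ) ≤ q := le_trans hu0 huq
      have hZq : Zfun c z0 w q ≤ Zfun c z0 w x0 := hx0max ⟨hq0, hqa⟩
      have h3 : (z0 + c * q + w q) + max (0 - (z0 + c * u + w u)) 0
          = bfun c z0 w q + gfun c z0 w u := rfl
      rw [h3] at hineq
      have : bfun c z0 w q + gfun c z0 w u ≤ Zfun c z0 w q := by
        simp only [Zfun]; linarith [hgu]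
      linarith [hm']
    obtain ⟨r, hr0, hrx, hrz⟩ := path_hit h0 h1 w0 wc (le_trans hx0mem.1 le_rfl) hz1x0
    exact le_trans (csInf_le hbdd ⟨hr0, hrz⟩) (le_trans hrx hx0mem.2)

end RDBMhelper

/-- `W` is a standard one-dimensional Brownian motion under the probability measure `P`:
`W 0 = 0` a.s., a.s. continuous sample paths on `[0, ∞)`, independent increments, and
`W t − W s` a centered Gaussian of variance `t − s` for `0 ≤ s ≤ t`. -/
structure IsStandardBrownianMotion {Ω : Type*} [MeasurableSpace Ω] (P : Measure Ω)
    (W : ℝ → Ω → ℝ) : Prop where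
  measurable : ∀ t : ℝ, Measurable (W t)
  init : ∀ᵐ ω ∂P, W 0 ω = 0
  cont : ∀ᵐ ω ∂P, ContinuousOn (fun t => W t ω) (Set.Ici 0)
  indep_incr : ∀ (n : ℕ) (t : Fin (n + 1) → ℝ), Monotone t → (∀ i, 0 ≤ t i) →
    iIndepFun
      (fun i : Fin n => fun ω => W (t i.succ) ω - W (t i.castSucc) ω) P
  gauss_incr : ∀ s t : ℝ, 0 ≤ s → s ≤ t →
    Measure.map (fun ω => W t ω - W s ω) P = gaussianReal 0 (Real.toNNReal (t - s))

/-- Finiteness of all moments of the hitting time of the level `z1 ≥ z0 ≥ 0` by the Brownian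
motion with drift `c` started from `z0` and positively reflected at `0`: the hitting time
`T = inf{r ≥ 0 : Z_r = z1}` is a.s. finite (the hitting set is a.s. nonempty) and
`E[T^k] < ∞` for every integer `k ≥ 1`. -/
theorem reflected_drifted_BM_hitting_time_moments {Ω : Type*} [MeasurableSpace Ω]
    (P : Measure Ω) [IsProbabilityMeasure P] (W : ℝ → Ω → ℝ)
    (hW : IsStandardBrownianMotion P W) (c z0 z1 : ℝ) (h0 : 0 ≤ z0) (h1 : z0 ≤ z1)
    (Z : ℝ → Ω → ℝ) (hZ : ∀ r ω, Z r ω = posRefl 0 0 (fun s => z0 + c * s + W s ω) r)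
    (T : Ω → ℝ) (hT : ∀ ω, T ω = sInf {r : ℝ | 0 ≤ r ∧ Z r ω = z1}) :
    (∀ᵐ ω ∂P, {r : ℝ | 0 ≤ r ∧ Z r ω = z1}.Nonempty) ∧
    ∀ k : ℕ, 1 ≤ k → Integrable (fun ω => (T ω) ^ k) P := by
  classical
  set κ : ℝ := z1 + |c| + 1 with hκdef
  set X : ℕ → Ω → ℝ := fun n ω => W ((n:ℝ)+1) ω - W (n:ℝ) ω with hXdef
  set A : ℕ → Set Ω := fun n => X n ⁻¹' Set.Ici κ with hAdef
  have hXmeas : ∀ n, Measurable (X n) := fun n => (hW.measurable _).sub (hW.measurable _)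
  have hAmeas : ∀ n, MeasurableSet (A n) := fun n => (hXmeas n) measurableSet_Ici
  have hmap : ∀ n : ℕ, Measure.map (X n) P = gaussianReal 0 1 := by
    intro n
    have h := hW.gauss_incr (n:ℝ) ((n:ℝ)+1) (Nat.cast_nonneg n) (by linarith)
    have he : Real.toNNReal (((n:ℝ)+1) - (n:ℝ)) = 1 := by norm_num
    rw [he] at h
    exact h
  set q : ℝ≥0∞ := gaussianReal 0 1 (Set.Iio κ) with hqdef
  have hPAc : ∀ n, P ((A n)ᶜ) = q := by
    intro n
    have hc : (A n)ᶜ = X n ⁻¹' Set.Iio κ := by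
      rw [hAdef, ← Set.preimage_compl, Set.compl_Ici]
    rw [hc, ← Measure.map_apply (hXmeas n) measurableSet_Iio, hmap n]
  have hq_ne_top : q ≠ ⊤ := (measure_lt_top _ _).ne
  have hq_lt_one : q < 1 := by
    have hIci : gaussianReal 0 1 (Set.Ici κ) ≠ 0 := by
      intro hzero
      rw [gaussianReal_apply 0 one_ne_zero] at hzero
      have h2 := (lintegral_eq_zero_iff (measurable_gaussianPDF 0 1)).mp hzero
      have h3 := (ae_restrict_iff' measurableSet_Ici).mp h2
      have h4 : ∀ᵐ x ∂(volume : Measure ℝ), x ∉ Set.Ici κ := by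
        filter_upwards [h3] with x hx hmem
        exact absurd (hx hmem) (gaussianPDF_pos 0 one_ne_zero x).ne'
      have h5 : (volume : Measure ℝ) (Set.Ici κ) = 0 :=
        measure_eq_zero_iff_ae_notMem.mpr h4
      rw [Real.volume_Ici] at h5
      simp at h5
    have hcompl : q = 1 - gaussianReal 0 1 (Set.Ici κ) := by
      rw [hqdef, ← Set.compl_Ici, prob_compl_eq_one_sub measurableSet_Ici]
    rw [hcompl]
    exact ENNReal.sub_lt_self ENNReal.one_ne_top one_ne_zero hIci
  set C : ℕ → Set Ω := fun N => ⋂ n ∈ Finset.range N, (A n)ᶜ with hCdef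
  have hCmeas : ∀ N, MeasurableSet (C N) :=
    fun N => MeasurableSet.biInter (Finset.range N).countable_toSet fun n _ => (hAmeas n).compl
  have hPC : ∀ N, P (C N) = q ^ N := by
    intro N
    have hind := hW.indep_incr N (fun i => ((i : ℕ) : ℝ))
      (fun a b hab => by exact_mod_cast Nat.cast_le.mpr (Fin.le_iff_val_le_val.mp hab))
      (fun i => Nat.cast_nonneg _)
    have hfi : ∀ i : Fin N,
        (fun ω => W (((i.succ : Fin (N+1)) : ℕ) : ℝ) ω - W (((i.castSucc : Fin (N+1)) : ℕ) : ℝ) ω)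
          = X i.val := by
      intro i
      funext ω
      have h1 : ((i.succ : Fin (N+1)) : ℕ) = i.val + 1 := Fin.val_succ i
      have h2 : ((i.castSucc : Fin (N+1)) : ℕ) = i.val := Fin.coe_castSucc i
      rw [h1, h2, hXdef]
      push_cast
      ring_nf
    have hs : ∀ i : Fin N, i ∈ Finset.univ →
        MeasurableSet[(inferInstance : MeasurableSpace ℝ).comap
          (fun ω => W (((i.succ : Fin (N+1)) : ℕ) : ℝ) ω - W (((i.castSucc : Fin (N+1)) : ℕ) : ℝ) ω)]
          ((A i.val)ᶜ) := by
      intro i _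
      refine ⟨Set.Iio κ, measurableSet_Iio, ?_⟩
      rw [hfi i, hAdef, ← Set.preimage_compl, Set.compl_Ici]
    have hbi := hind.meas_biInter (S := Finset.univ) (s := fun i : Fin N => (A i.val)ᶜ) hs
    have hleft : (⋂ i ∈ (Finset.univ : Finset (Fin N)), (A i.val)ᶜ) = C N := by
      ext ω
      simp only [Set.mem_iInter, Finset.mem_univ, true_implies, hCdef, Finset.mem_range,
        Finset.mem_coe]
      constructor
      · intro h n hn
        exact h ⟨n, hn⟩
      · intro h i
        exact h i.val i.isLt
    have hright : (∏ i ∈ (Finset.univ : Finset (Fin N)), P ((A i.val)ᶜ)) = q ^ N := by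
      simp only [hPAc, Finset.prod_const, Finset.card_univ, Fintype.card_fin]
    rw [← hleft, hbi, hright]
  have hex_ae : ∀ᵐ ω ∂P, ∃ n : ℕ, ω ∈ A n := by
    have hsub : ∀ N, (⋂ n : ℕ, (A n)ᶜ) ⊆ C N := by
      intro N ω hω
      simp only [hCdef, Set.mem_iInter, Finset.mem_coe, Finset.mem_range]
      intro n _
      exact Set.mem_iInter.mp hω n
    have hle : ∀ N, P (⋂ n : ℕ, (A n)ᶜ) ≤ q ^ N := fun N => (measure_mono (hsub N)).trans (hPC N).le
    have htend : Filter.Tendsto (fun N : ℕ => q ^ N) Filter.atTop (nhds 0) :=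
      ENNReal.tendsto_pow_atTop_nhds_zero_of_lt_one hq_lt_one
    have hzero : P (⋂ n : ℕ, (A n)ᶜ) = 0 :=
      le_antisymm (ge_of_tendsto htend (Filter.Eventually.of_forall hle)) (zero_le)
    have := measure_eq_zero_iff_ae_notMem.mp hzero
    filter_upwards [this] with ω hω
    simpa [Set.mem_iInter] using hω
  -- good set
  set good : Set Ω := {ω | W 0 ω = 0 ∧ ContinuousOn (fun t => W t ω) (Set.Ici 0) ∧ ∃ n, ω ∈ A n}
    with hgooddef
  have hgood : ∀ᵐ ω ∂P, ω ∈ good := by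
    filter_upwards [hW.init, hW.cont, hex_ae] with ω ha hb hc
    exact ⟨ha, hb, hc⟩
  -- pathwise key fact
  have hZw : ∀ ω r, Z r ω = RDBMhelper.Zfun c z0 (fun t => W t ω) r := by
    intro ω r
    rw [hZ r ω, RDBMhelper.Zfun_eq]
  have key : ∀ ω, ω ∈ good → ∀ n : ℕ, ω ∈ A n →
      ∃ r, 0 ≤ r ∧ r ≤ (n:ℝ)+1 ∧ Z r ω = z1 := by
    intro ω hg n hn
    obtain ⟨hw0, hwc, -⟩ := hg
    have hb : (0:ℝ) ≤ (n:ℝ)+1 := by positivity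
    have hAn : κ ≤ W ((n:ℝ)+1) ω - W (n:ℝ) ω := hn
    have hzb : z1 ≤ RDBMhelper.Zfun c z0 (fun t => W t ω) ((n:ℝ)+1) := by
      have hincr := RDBMhelper.Zfun_incr (c := c) (z0 := z0) hwc (Nat.cast_nonneg n)
        (by linarith : (n:ℝ) ≤ (n:ℝ)+1)
      have hnn := RDBMhelper.Zfun_nonneg (c := c) (z0 := z0) hwc (Nat.cast_nonneg n)
      have hbb : RDBMhelper.bfun c z0 (fun t => W t ω) ((n:ℝ)+1)
          - RDBMhelper.bfun c z0 (fun t => W t ω) (n:ℝ)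
          = c + (W ((n:ℝ)+1) ω - W (n:ℝ) ω) := by
        simp only [RDBMhelper.bfun]; ring
      rw [hbb] at hincr
      have habs := neg_abs_le c
      rw [hκdef] at hAn
      linarith
    obtain ⟨r, hr1, hr2, hr3⟩ := RDBMhelper.path_hit h0 h1 hw0 hwc hb hzb
    exact ⟨r, hr1, hr2, by rw [hZw ω r]; exact hr3⟩
  have hT0 : ∀ ω, 0 ≤ T ω := by
    intro ω
    rw [hT]
    exact Real.sInf_nonneg fun x hx => hx.1
  have hTub : ∀ ω, ω ∈ good → ∀ n : ℕ, ω ∈ A n → T ω ≤ (n:ℝ)+1 := by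
    intro ω hg n hn
    obtain ⟨r, hr0, hrn, hrz⟩ := key ω hg n hn
    rw [hT]
    exact le_trans (csInf_le ⟨0, fun x hx => hx.1⟩ ⟨hr0, hrz⟩) hrn
  -- part 1
  have part1 : ∀ᵐ ω ∂P, {r : ℝ | 0 ≤ r ∧ Z r ω = z1}.Nonempty := by
    filter_upwards [hgood] with ω hg
    obtain ⟨n, hn⟩ := hg.2.2
    obtain ⟨r, hr0, -, hrz⟩ := key ω hg n hn
    exact ⟨r, hr0, hrz⟩
  refine ⟨part1, ?_⟩
  -- null modification
  have hnull : P goodᶜ = 0 := by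
    have := hgood
    rw [Filter.eventually_iff, mem_ae_iff] at this
    simpa using this
  obtain ⟨Nset, hNsub, hNmeas, hNnull⟩ := exists_measurable_superset_of_null hnull
  have hNc_good : Nsetᶜ ⊆ good := by
    intro ω hω
    by_contra h
    exact hω (hNsub h)
  set f : Ω → ℝ := fun ω => if ω ∈ Nset then 0 else T ω with hfdef
  -- measurable characterization sets
  set D : ℝ → Set Ω := fun a => ⋂ m : ℕ, ⋃ qq : ℚ, ⋃ uu : ℚ,
      ⋃ (_ : 0 ≤ (uu:ℝ) ∧ (uu:ℝ) ≤ (qq:ℝ) ∧ (qq:ℝ) ≤ a),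
      {ω | z1 - 1/(m+1) < (z0 + c * qq + W qq ω) + max (0 - (z0 + c * uu + W uu ω)) 0}
    with hDdef
  have hDmeas : ∀ a, MeasurableSet (D a) := by
    intro a
    refine MeasurableSet.iInter fun m => MeasurableSet.iUnion fun qq =>
      MeasurableSet.iUnion fun uu => MeasurableSet.iUnion fun _ => ?_
    have hF : Measurable fun ω =>
        (z0 + c * qq + W qq ω) + max (0 - (z0 + c * uu + W uu ω)) 0 := by
      apply Measurable.add
      · exact (hW.measurable _).const_add _
      · exact (measurable_const.sub ((hW.measurable _).const_add _)).max measurable_const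
    exact measurableSet_lt measurable_const hF
  have hDiff : ∀ a : ℝ, 0 ≤ a → ∀ ω, ω ∈ good → (T ω ≤ a ↔ ω ∈ D a) := by
    intro a ha ω hg
    obtain ⟨hw0, hwc, hex⟩ := hg
    obtain ⟨n, hn⟩ := hex
    have hne : {r : ℝ | 0 ≤ r ∧ RDBMhelper.Zfun c z0 (fun t => W t ω) r = z1}.Nonempty := by
      obtain ⟨r, hr0, -, hrz⟩ := key ω ⟨hw0, hwc, ⟨n, hn⟩⟩ n hn
      exact ⟨r, hr0, by rw [← hZw ω r]; exact hrz⟩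
    have hchar := RDBMhelper.path_char (c := c) h0 h1 hw0 hwc hne ha
    have hTset : T ω = sInf {r : ℝ | 0 ≤ r ∧ RDBMhelper.Zfun c z0 (fun t => W t ω) r = z1} := by
      rw [hT]
      congr 1
      ext r
      rw [Set.mem_setOf_eq, Set.mem_setOf_eq, hZw ω r]
    rw [hTset, hchar]
    simp only [hDdef, Set.mem_iInter, Set.mem_iUnion, Set.mem_setOf_eq, exists_prop]
  have hfmeas : Measurable f := by
    apply measurable_of_Iic
    intro a
    rcases lt_or_ge a 0 with ha | ha
    · have hempty : f ⁻¹' Set.Iic a = ∅ := by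
        ext ω
        simp only [Set.mem_preimage, Set.mem_Iic, Set.mem_empty_iff_false, iff_false, not_le]
        by_cases hω : ω ∈ Nset
        · simp only [hfdef, if_pos hω]; linarith
        · simp only [hfdef, if_neg hω]; exact lt_of_lt_of_le ha (hT0 ω)
      rw [hempty]
      exact MeasurableSet.empty
    · have heq : f ⁻¹' Set.Iic a = Nset ∪ (Nsetᶜ ∩ D a) := by
        ext ω
        by_cases hω : ω ∈ Nset
        · simp only [Set.mem_preimage, Set.mem_Iic, hfdef, if_pos hω, Set.mem_union,
            Set.mem_inter_iff, Set.mem_compl_iff]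
          tauto
        · have hg := hNc_good hω
          simp only [Set.mem_preimage, Set.mem_Iic, hfdef, if_neg hω, Set.mem_union,
            Set.mem_inter_iff, Set.mem_compl_iff, hω, not_false_iff, true_and, false_or]
          exact hDiff a ha ω hg
      rw [heq]
      exact hNmeas.union (hNmeas.compl.inter (hDmeas a))
  have hNae : ∀ᵐ ω ∂P, ω ∉ Nset := measure_eq_zero_iff_ae_notMem.mp hNnull
  have hfT : ∀ᵐ ω ∂P, f ω = T ω := by
    filter_upwards [hNae] with ω hω
    simp only [hfdef, if_neg hω]
  -- part 2
  intro k hk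
  constructor
  · refine (hfmeas.pow_const k).aestronglyMeasurable.congr ?_
    filter_upwards [hfT] with ω hω
    rw [hω]
  · rw [hasFiniteIntegral_iff_norm]
    set aE : ℕ → ℝ≥0∞ := fun n => ENNReal.ofReal ((n:ℝ)^k) with haEdef
    set d : ℕ → ℝ≥0∞ := fun n => aE (n+1) - aE n with hddef
    have haE_mono : Monotone aE := by
      intro i j hij
      exact ENNReal.ofReal_le_ofReal (pow_le_pow_left₀ (by positivity) (by exact_mod_cast hij) k)
    have hptwise : ∀ᵐ ω ∂P,
        ENNReal.ofReal ‖T ω ^ k‖ ≤ ∑' n, (C n).indicator (fun _ => d n) ω := by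
      filter_upwards [hgood] with ω hg
      obtain ⟨hw0, hwc, hex⟩ := hg
      set n₀ := Nat.find hex with hn₀def
      have hA0 : ω ∈ A n₀ := Nat.find_spec hex
      have hTle : T ω ≤ (n₀:ℝ)+1 := hTub ω ⟨hw0, hwc, hex⟩ n₀ hA0
      have h1 : ENNReal.ofReal ‖T ω ^ k‖ ≤ aE (n₀+1) := by
        rw [Real.norm_eq_abs, abs_of_nonneg (pow_nonneg (hT0 ω) k)]
        apply ENNReal.ofReal_le_ofReal
        calc T ω ^ k ≤ ((n₀:ℝ)+1)^k := pow_le_pow_left₀ (hT0 ω) hTle k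
          _ = (((n₀+1 : ℕ)):ℝ)^k := by push_cast; ring
      have haE0 : aE 0 = 0 := by
        simp only [haEdef, Nat.cast_zero]
        rw [zero_pow (by omega : k ≠ 0)]
        simp
      have h2 : aE (n₀+1) = ∑ n ∈ Finset.range (n₀+1), d n := by
        have hgen : ∀ m : ℕ, ∑ n ∈ Finset.range m, d n = aE m := by
          intro m
          induction m with
          | zero => simp [haE0]
          | succ m ih =>
              rw [Finset.sum_range_succ, ih, hddef]
              exact add_tsub_cancel_of_le (haE_mono (Nat.le_succ m))
        exact (hgen (n₀+1)).symm
      have h3 : ∀ n ∈ Finset.range (n₀+1), (C n).indicator (fun _ => d n) ω = d n := by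
        intro n hn
        apply Set.indicator_of_mem
        rw [hCdef]
        simp only [Set.mem_iInter, Finset.mem_coe, Finset.mem_range]
        intro m hm
        exact Nat.find_min hex (lt_of_lt_of_le hm (Nat.lt_succ_iff.mp (Finset.mem_range.mp hn)))
      calc ENNReal.ofReal ‖T ω ^ k‖ ≤ aE (n₀+1) := h1
        _ = ∑ n ∈ Finset.range (n₀+1), d n := h2
        _ = ∑ n ∈ Finset.range (n₀+1), (C n).indicator (fun _ => d n) ω :=
            (Finset.sum_congr rfl h3).symm
        _ ≤ ∑' n, (C n).indicator (fun _ => d n) ω := ENNReal.sum_le_tsum _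
    set qr : ℝ := q.toReal with hqrdef
    have hq_eq : q = ENNReal.ofReal qr := (ENNReal.ofReal_toReal hq_ne_top).symm
    have hqr0 : 0 ≤ qr := ENNReal.toReal_nonneg
    have hqr1 : qr < 1 := by
      have := (ENNReal.toReal_lt_toReal hq_ne_top ENNReal.one_ne_top).mpr hq_lt_one
      simpa using this
    have hsum : Summable (fun n : ℕ => ((n:ℝ)+1)^k * qr^n) := by
      have hb : ∀ j, Summable (fun n : ℕ => (n:ℝ)^j * qr^n * (Nat.choose k j : ℝ)) := by
        intro j
        exact (summable_pow_mul_geometric_of_norm_lt_one (r := qr) j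
          (by rwa [Real.norm_eq_abs, abs_of_nonneg hqr0])).mul_right _
      have hrw : (fun n : ℕ => ((n:ℝ)+1)^k * qr^n)
          = fun n : ℕ => ∑ j ∈ Finset.range (k+1), (n:ℝ)^j * qr^n * (Nat.choose k j : ℝ) := by
        funext n
        rw [add_pow, Finset.sum_mul]
        apply Finset.sum_congr rfl
        intro j _
        rw [one_pow]
        ring
      rw [hrw]
      exact summable_sum fun j _ => hb j
    calc ∫⁻ ω, ENNReal.ofReal ‖T ω ^ k‖ ∂P
        ≤ ∫⁻ ω, ∑' n, (C n).indicator (fun _ => d n) ω ∂P := lintegral_mono_ae hptwise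
      _ = ∑' n, ∫⁻ ω, (C n).indicator (fun _ => d n) ω ∂P :=
          lintegral_tsum fun n => (measurable_const.indicator (hCmeas n)).aemeasurable
      _ = ∑' n, d n * P (C n) := by
          apply tsum_congr
          intro n
          rw [lintegral_indicator_const (hCmeas n)]
      _ ≤ ∑' n : ℕ, ENNReal.ofReal (((n:ℝ)+1)^k) * q ^ n := by
          apply ENNReal.tsum_le_tsum
          intro n
          apply mul_le_mul'
          · refine le_trans tsub_le_self (le_of_eq ?_)
            simp only [haEdef]
            push_cast
            ring_nf
          · exact (hPC n).le
      _ = ∑' n : ℕ, ENNReal.ofReal (((n:ℝ)+1)^k * qr^n) := by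
          apply tsum_congr
          intro n
          rw [hq_eq, ← ENNReal.ofReal_pow hqr0, ← ENNReal.ofReal_mul (by positivity)]
      _ < ⊤ := by
          rw [← ENNReal.ofReal_tsum_of_nonneg (fun n => by positivity) hsum]
          exact ENNReal.ofReal_lt_top
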